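/- Let X be an ℓ×ℓ matrix over a field whose (i,j)-entry is zero for (i,j) ∉ λ, where λ is a partition of length ℓ with λ_i ≥ ℓ - i + 1 for all i ∈ [ℓ] (i.e., λ contains the staircase). If for each i the entries X_{i,1}, ..., X_{i,λ_i} are generic (e.g., algebraically independent), then X is invertible. More precisely: for i.i.d. continuous complex entries on λ and zeros elsewhere, X is almost surely invertible if and only if λ_i ≥ ℓ - i + 1 for all i. -/

import Mathlib

def cellMem (L : ℕ → ℕ) (i j : ℕ) : Prop := 1 ≤ i ∧ 1 ≤ j ∧ j ≤ L i

def IsPartitionOfLength (L : ℕ → ℕ) (l : ℕ) : Prop :=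
  (∀ i j, 1 ≤ i → i ≤ j → L j ≤ L i) ∧ ∀ i, 1 ≤ i → (1 ≤ L i ↔ i ≤ l)

def SelfConjugate (L : ℕ → ℕ) : Prop := ∀ i j, cellMem L i j ↔ cellMem L j i

open MeasureTheory MvPolynomial

private lemma aux_not_mem_vars {σ : Type*} {i : σ} {p : MvPolynomial σ ℂ}
    (h : degreeOf i p = 0) : i ∉ p.vars := by
  intro hv
  obtain ⟨d, hd, hid⟩ := (mem_vars i).mp hv
  have h1 : d i ≤ 0 := (degreeOf_le_iff.mp h.le) d hd
  have h2 : d i ≠ 0 := Finsupp.mem_support_iff.mp hid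
  omega

private lemma aux_degreeOf_eq_zero {σ : Type*} {i : σ} {p : MvPolynomial σ ℂ}
    (h : i ∉ p.vars) : degreeOf i p = 0 := by
  rw [← Nat.le_zero, degreeOf_le_iff]
  intro m hm
  by_contra hc
  exact h ((mem_vars i).mpr ⟨m, hm, Finsupp.mem_support_iff.mpr (by omega)⟩)

private lemma aux_poly {ν : Measure ℂ} (hν : ν ≪ volume) {q : Polynomial ℂ} (hq : q ≠ 0) :
    ∀ᵐ x ∂ν, Polynomial.eval x q ≠ 0 := by
  rw [ae_iff]
  simp only [ne_eq, not_not]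
  exact hν ((Polynomial.finite_setOf_isRoot hq).measure_zero _)

private lemma aux_mv : ∀ (n : ℕ) (ν : Fin n → Measure ℂ), (∀ i, IsProbabilityMeasure (ν i)) →
    ∀ (p : MvPolynomial (Fin n) ℂ), p ≠ 0 →
    (∀ i, ν i ≪ volume ∨ (ν i = Measure.dirac 0 ∧ i ∉ p.vars)) →
    ∀ᵐ ω ∂Measure.pi ν, eval ω p ≠ 0 := by
  intro n
  induction n with
  | zero =>
    intro ν _ p hp _
    obtain ⟨c, rfl⟩ := C_surjective (Fin 0) p
    have hc : c ≠ 0 := fun h => hp (by rw [h, map_zero])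
    exact Filter.Eventually.of_forall fun ω => by simpa using hc
  | succ n ih =>
    intro ν hprob p hp h
    haveI := hprob
    set ν' : Fin n → Measure ℂ := fun j => ν j.succ with hν'
    haveI hprob' : ∀ j, IsProbabilityMeasure (ν' j) := fun j => hprob _
    have hq : finSuccEquiv ℂ n p ≠ 0 :=
      (map_ne_zero_iff _ (finSuccEquiv ℂ n).injective).mpr hp
    have hvars : ∀ (k : ℕ) (j : Fin n), j.succ ∉ p.vars →
        j ∉ ((finSuccEquiv ℂ n p).coeff k).vars := by
      intro k j hj
      refine aux_not_mem_vars (Nat.le_zero.mp ?_)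
      calc degreeOf j ((finSuccEquiv ℂ n p).coeff k) ≤ degreeOf j.succ p :=
            degreeOf_coeff_finSuccEquiv p j k
        _ = 0 := aux_degreeOf_eq_zero hj
    have key : ∀ᵐ y ∂Measure.pi ν', ∀ᵐ x ∂ν 0, eval (Fin.cons x y) p ≠ 0 := by
      rcases h 0 with h0 | ⟨h0, hv⟩
      · -- absolutely continuous case
        have hc : (finSuccEquiv ℂ n p).coeff (finSuccEquiv ℂ n p).natDegree ≠ 0 := by
          have := Polynomial.leadingCoeff_ne_zero.mpr hq
          rwa [Polynomial.leadingCoeff] at this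
        have ihy := ih ν' hprob' _ hc (by
          intro j
          rcases h j.succ with hj | ⟨hj, hjv⟩
          · exact Or.inl hj
          · exact Or.inr ⟨hj, hvars _ j hjv⟩)
        refine ihy.mono fun y hy => ?_
        have hqy : (finSuccEquiv ℂ n p).map (eval y) ≠ 0 := by
          intro hc0
          apply hy
          have := congrArg (fun r => Polynomial.coeff r (finSuccEquiv ℂ n p).natDegree) hc0
          simpa [Polynomial.coeff_map] using this
        refine (aux_poly h0 hqy).mono fun x hx => ?_
        rw [eval_eq_eval_mv_eval']
        exact hx
      · -- dirac case
        have hdeg : (finSuccEquiv ℂ n p).natDegree = 0 := by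
          rw [natDegree_finSuccEquiv]
          exact aux_degreeOf_eq_zero hv
        have hC : finSuccEquiv ℂ n p = Polynomial.C ((finSuccEquiv ℂ n p).coeff 0) :=
          Polynomial.eq_C_of_natDegree_eq_zero hdeg
        have hc : (finSuccEquiv ℂ n p).coeff 0 ≠ 0 := by
          intro h0
          exact hq (by rw [hC, h0, map_zero])
        have ihy := ih ν' hprob' _ hc (by
          intro j
          rcases h j.succ with hj | ⟨hj, hjv⟩
          · exact Or.inl hj
          · exact Or.inr ⟨hj, hvars _ j hjv⟩)
        refine ihy.mono fun y hy => Filter.Eventually.of_forall fun x => ?_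
        rw [eval_eq_eval_mv_eval', hC]
        simpa using hy
    -- now convert to measure-zero statement using the product structure
    rw [ae_iff]
    simp only [ne_eq, not_not]
    have hEm : MeasurableSet {ω : Fin (n+1) → ℂ | eval ω p = 0} :=
      ((MvPolynomial.continuous_eval p).measurable) (measurableSet_singleton 0)
    have hmp : MeasurePreserving (MeasurableEquiv.piFinSuccAbove (fun _ => ℂ) 0).symm
        ((ν 0).prod (Measure.pi fun j => ν (Fin.succAbove 0 j))) (Measure.pi ν) :=
      (measurePreserving_piFinSuccAbove ν 0).symm _
    have hpre := hmp.measure_preimage hEm.nullMeasurableSet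
    rw [← hpre]
    set S : Set (ℂ × (Fin n → ℂ)) :=
      (MeasurableEquiv.piFinSuccAbove (fun _ => ℂ) 0).symm ⁻¹' {ω : Fin (n+1) → ℂ | eval ω p = 0}
      with hSdef
    have hS : MeasurableSet S :=
      hEm.preimage (MeasurableEquiv.piFinSuccAbove (fun _ => ℂ) 0).symm.measurable
    have hSeq : ∀ (x : ℂ) (y : Fin n → ℂ), ((x, y) ∈ S ↔ eval (Fin.cons x y) p = 0) := by
      intro x y
      have hcons : (MeasurableEquiv.piFinSuccAbove (fun _ => ℂ) 0).symm (x, y) = Fin.cons x y := by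
        ext j
        simp [MeasurableEquiv.piFinSuccAbove, Fin.insertNth_zero]
      rw [hSdef, Set.mem_preimage, hcons]
      exact Iff.rfl
    have htail : (Measure.pi fun j => ν (Fin.succAbove 0 j)) = Measure.pi ν' := by
      simp only [Fin.succAbove_zero, hν']
    rw [htail, Measure.prod_apply_symm hS,
      lintegral_eq_zero_iff (measurable_measure_prodMk_right hS)]
    refine key.mono fun y hy => ?_
    have hy0 : ν 0 {x : ℂ | eval (Fin.cons x y) p = 0} = 0 := by
      rw [ae_iff] at hy
      simpa using hy
    have hsets : (fun x : ℂ => (x, y)) ⁻¹' S = {x : ℂ | eval (Fin.cons x y) p = 0} := by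
      ext x
      rw [Set.mem_preimage, hSeq x y]
      rfl
    show (ν 0) ((fun x : ℂ => (x, y)) ⁻¹' S) = 0
    rw [hsets]
    exact hy0

private lemma aux_mv' {ι : Type*} [Fintype ι] (ν : ι → Measure ℂ)
    [hprob : ∀ i, IsProbabilityMeasure (ν i)] (p : MvPolynomial ι ℂ) (hp : p ≠ 0)
    (h : ∀ i, ν i ≪ volume ∨ (ν i = Measure.dirac 0 ∧ i ∉ p.vars)) :
    ∀ᵐ ω ∂Measure.pi ν, eval ω p ≠ 0 := by
  set n := Fintype.card ι with hn
  set f : Fin n ≃ ι := (Fintype.equivFin ι).symm with hf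
  have hmp := measurePreserving_piCongrLeft (fun i => ν i) f
  set p' : MvPolynomial (Fin n) ℂ := rename f.symm p with hp'def
  have hp' : p' ≠ 0 :=
    (map_ne_zero_iff _ (rename_injective (R := ℂ) f.symm f.symm.injective)).mpr hp
  have hcond : ∀ j : Fin n, ν (f j) ≪ volume ∨ (ν (f j) = Measure.dirac 0 ∧ j ∉ p'.vars) := by
    intro j
    rcases h (f j) with hj | ⟨hj, hjv⟩
    · exact Or.inl hj
    · refine Or.inr ⟨hj, fun hjmem => ?_⟩
      have := vars_rename f.symm p hjmem
      obtain ⟨i, hi, hij⟩ := Finset.mem_image.mp this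
      have : i = f j := by
        have := congrArg f hij
        simpa using this
      exact hjv (this ▸ hi)
  have hae := aux_mv n (fun j => ν (f j)) (fun j => hprob _) p' hp' hcond
  rw [← hmp.map_eq,
    MeasurableEmbedding.ae_map_iff (MeasurableEquiv.piCongrLeft (fun _ => ℂ) f).measurableEmbedding]
  refine hae.mono fun ω' hω' => ?_
  have heq : (MeasurableEquiv.piCongrLeft (fun _ : ι => ℂ) f) ω' = fun i => ω' (f.symm i) := by
    funext i
    simp [MeasurableEquiv.piCongrLeft, Equiv.piCongrLeft_apply_apply]
    obtain ⟨k, rfl⟩ := f.surjective i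
    simp [Equiv.piCongrLeft_apply_apply]
  rw [heq]
  intro h0
  apply hω'
  rw [hp'def, eval_rename]
  exact h0

open MeasureTheory in
open scoped Classical in
/-- A `λ`-shaped random matrix with i.i.d. absolutely continuous entries on `λ`
(and zeros elsewhere) is almost surely invertible iff `λ_i ≥ ℓ - i + 1` for all
`i ∈ [ℓ]`, i.e. iff `λ` contains the staircase. -/
theorem stmt13 (l : ℕ) (hl : 1 ≤ l) (L : ℕ → ℕ) (hL : IsPartitionOfLength L l)
    (μ : Measure ℂ) [IsProbabilityMeasure μ] (hμ : μ ≪ volume) :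
    (∀ᵐ ω ∂(Measure.pi fun p : Fin l × Fin l =>
        if cellMem L (p.1.val + 1) (p.2.val + 1) then μ else Measure.dirac 0),
      (Matrix.of fun i j : Fin l => ω (i, j)).det ≠ 0) ↔
    ∀ i, 1 ≤ i → i ≤ l → l - i + 1 ≤ L i := by
  set ν : Fin l × Fin l → Measure ℂ := fun p =>
    if cellMem L (p.1.val + 1) (p.2.val + 1) then μ else Measure.dirac 0 with hνdef
  haveI hprob : ∀ q : Fin l × Fin l, IsProbabilityMeasure (ν q) := by
    intro q
    rw [hνdef]
    dsimp only
    split_ifs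
    · infer_instance
    · infer_instance
  -- the almost sure event that all entries outside λ vanish
  have hE0 : ∀ᵐ ω ∂Measure.pi ν,
      ∀ q : Fin l × Fin l, ¬ cellMem L (q.1.val + 1) (q.2.val + 1) → ω q = 0 := by
    rw [ae_iff]
    have hset : {ω : Fin l × Fin l → ℂ |
          ¬ ∀ q : Fin l × Fin l, ¬ cellMem L (q.1.val + 1) (q.2.val + 1) → ω q = 0}
        = (Set.pi Set.univ fun q : Fin l × Fin l =>
            if cellMem L (q.1.val + 1) (q.2.val + 1) then (Set.univ : Set ℂ) else {0})ᶜ := by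
      ext ω
      simp only [Set.mem_compl_iff, Set.mem_pi, Set.mem_univ, forall_true_left,
        Set.mem_setOf_eq]
      rw [not_iff_not]
      constructor
      · intro hq q
        by_cases hc : cellMem L (q.1.val + 1) (q.2.val + 1)
        · rw [if_pos hc]; trivial
        · rw [if_neg hc]; exact hq q hc
      · intro hall q hc
        have := hall q
        rw [if_neg hc] at this
        exact this
    have hmeas : MeasurableSet (Set.pi Set.univ fun q : Fin l × Fin l =>
        if cellMem L (q.1.val + 1) (q.2.val + 1) then (Set.univ : Set ℂ) else {0}) :=
      MeasurableSet.univ_pi fun q => by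
        split_ifs
        · exact MeasurableSet.univ
        · exact measurableSet_singleton 0
    haveI : IsProbabilityMeasure (Measure.pi ν) := inferInstance
    rw [hset, measure_compl hmeas (measure_ne_top _ _), Measure.pi_pi]
    have hone : ∀ q : Fin l × Fin l,
        ν q (if cellMem L (q.1.val + 1) (q.2.val + 1) then (Set.univ : Set ℂ) else {0}) = 1 := by
      intro q
      by_cases hq : cellMem L (q.1.val + 1) (q.2.val + 1)
      · rw [hνdef]; dsimp only; rw [if_pos hq, if_pos hq]; exact measure_univ
      · rw [hνdef]; dsimp only; rw [if_neg hq, if_neg hq]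
        exact Measure.dirac_apply_of_mem rfl
    simp only [hone, Finset.prod_const_one, measure_univ]
    simp
  -- determinant vanishes identically when the staircase is not contained
  have detzero : ∀ i : ℕ, 1 ≤ i → i ≤ l → L i ≤ l - i →
      ∀ ω : Fin l × Fin l → ℂ,
        (∀ q : Fin l × Fin l, ¬ cellMem L (q.1.val + 1) (q.2.val + 1) → ω q = 0) →
        (Matrix.of fun a b : Fin l => ω (a, b)).det = 0 := by
    intro i hi1 hil hLi ω hω
    rw [Matrix.det_apply]
    refine Finset.sum_eq_zero fun σ _ => ?_
    obtain ⟨c, hc1, hc2⟩ : ∃ c : Fin l, L i ≤ c.val ∧ i - 1 ≤ (σ c).val := by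
      by_contra hcon
      push_neg at hcon
      have hmaps : ∀ c ∈ Finset.Ici (⟨L i, by omega⟩ : Fin l),
          σ c ∈ Finset.Iio (⟨i - 1, by omega⟩ : Fin l) := by
        intro c hc
        have hc' : L i ≤ c.val := by
          have := Finset.mem_Ici.mp hc
          simpa [Fin.le_def] using this
        have := hcon c hc'
        simpa [Finset.mem_Iio, Fin.lt_def] using this
      have hcard := Finset.card_le_card_of_injOn σ hmaps σ.injective.injOn
      rw [Fin.card_Ici, Fin.card_Iio] at hcard
      simp only at hcard
      omega
    have hent : ω (σ c, c) = 0 := by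
      apply hω
      rintro ⟨-, -, hle⟩
      have hmono := hL.1 i ((σ c).val + 1) hi1 (by omega)
      simp only at hle
      omega
    have hzero : (∏ b, (Matrix.of fun a b : Fin l => ω (a, b)) (σ b) b) = 0 :=
      Finset.prod_eq_zero (Finset.mem_univ c) (by simpa using hent)
    rw [hzero, smul_zero]
  constructor
  · -- forward direction
    intro hae
    by_contra hcon
    push_neg at hcon
    obtain ⟨i, hi1, hil, hLi⟩ := hcon
    have hz : ∀ᵐ ω ∂Measure.pi ν, (Matrix.of fun a b : Fin l => ω (a, b)).det = 0 :=
      hE0.mono fun ω hω => detzero i hi1 hil (by omega) ω hω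
    haveI : IsProbabilityMeasure (Measure.pi ν) := inferInstance
    obtain ⟨ω, h1, h2⟩ := (hae.and hz).exists
    exact h1 h2
  · -- reverse direction
    intro hst
    set M : Matrix (Fin l) (Fin l) (MvPolynomial (Fin l × Fin l) ℂ) :=
      Matrix.of fun a b : Fin l =>
        if cellMem L (a.val + 1) (b.val + 1) then X (a, b) else 0 with hM
    set P := M.det with hP
    have hsupp : P ∈ supported ℂ {q : Fin l × Fin l | cellMem L (q.1.val + 1) (q.2.val + 1)} := by
      rw [hP, Matrix.det_apply]
      refine Subalgebra.sum_mem _ fun σ _ => ?_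
      rw [Units.smul_def, zsmul_eq_mul]
      refine Subalgebra.mul_mem _ (intCast_mem _ _) (Subalgebra.prod_mem _ fun b _ => ?_)
      rw [hM]
      simp only [Matrix.of_apply]
      split_ifs with hc
      · exact X_mem_supported.mpr hc
      · exact Subalgebra.zero_mem _
    have hvars : ∀ q : Fin l × Fin l, ¬ cellMem L (q.1.val + 1) (q.2.val + 1) → q ∉ P.vars :=
      fun q hq hqv => hq (mem_supported.mp hsupp hqv)
    -- the staircase cells belong to λ
    have hcellrev : ∀ a : Fin l, cellMem L (a.val + 1) ((Fin.rev a).val + 1) := by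
      intro a
      have hrev : (Fin.rev a).val = l - 1 - a.val := by
        simp [Fin.val_rev]
        omega
      have halt : a.val < l := a.isLt
      have := hst (a.val + 1) (by omega) (by omega)
      refine ⟨by omega, by omega, by omega⟩
    -- P is a nonzero polynomial
    have hPne : P ≠ 0 := by
      intro h0
      set ω₀ : Fin l × Fin l → ℂ := fun q => if q.2 = Fin.rev q.1 then 1 else 0 with hω₀
      have hMat : M.map (eval ω₀) = (Fin.revPerm : Equiv.Perm (Fin l)).permMatrix ℂ := by
        ext a b
        have hperm : (Fin.revPerm : Equiv.Perm (Fin l)).permMatrix ℂ a b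
            = if Fin.rev a = b then 1 else 0 := by
          simp [Equiv.Perm.permMatrix, Equiv.toPEquiv, PEquiv.toMatrix]
        rw [Matrix.map_apply, hperm]
        by_cases hb : b = Fin.rev a
        · subst hb
          have hMab : M a (Fin.rev a) = X (a, Fin.rev a) := by
            rw [hM]
            exact if_pos (hcellrev a)
          rw [hMab, eval_X, if_pos rfl]
          simp [hω₀]
        · rw [if_neg (fun h => hb h.symm)]
          rw [hM]
          show eval ω₀ (if cellMem L (a.val + 1) (b.val + 1) then X (a, b) else 0) = 0
          split_ifs with hc
          · rw [eval_X]
            simp [hω₀, hb]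
          · simp
      have heval : eval ω₀ P = ((Equiv.Perm.sign (Fin.revPerm : Equiv.Perm (Fin l)) : ℤ) : ℂ) := by
        have h1 : eval ω₀ P = (M.map (eval ω₀)).det := RingHom.map_det _ M
        rw [h1, hMat, Matrix.det_permutation]
      rw [h0] at heval
      simp only [map_zero] at heval
      rcases Int.units_eq_one_or (Equiv.Perm.sign (Fin.revPerm : Equiv.Perm (Fin l))) with h1 | h1 <;>
        rw [h1] at heval <;> norm_num at heval
    have hA : ∀ᵐ ω ∂Measure.pi ν, eval ω P ≠ 0 := by
      refine aux_mv' ν P hPne fun q => ?_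
      by_cases hq : cellMem L (q.1.val + 1) (q.2.val + 1)
      · left
        rw [hνdef]; dsimp only; rw [if_pos hq]; exact hμ
      · right
        refine ⟨by rw [hνdef]; dsimp only; rw [if_neg hq], hvars q hq⟩
    refine (hA.and hE0).mono fun ω hω => ?_
    obtain ⟨h1, h2⟩ := hω
    have hmat : (Matrix.of fun a b : Fin l => ω (a, b)) = M.map (eval ω) := by
      ext a b
      simp only [Matrix.map_apply, hM, Matrix.of_apply]
      split_ifs with hc
      · simp
      · simp [h2 (a, b) hc]
    rw [hmat]
    have hdet : eval ω P = (M.map (eval ω)).det := RingHom.map_det _ M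
    rw [← hdet]
    exact h1
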